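/- arXiv:1011.3486 — 4 statements merged into one kernel-verified Lean document; each statement's English description precedes it below -/
import Mathlib

section
/- If u₁ is a positive C¹ eigenfunction of (ψ_p(u′))′ = −λ₁ψ_p(u) on [a,b] with u₁(a)=u₁(b)=0 normalized so that max u₁ = 1, then (p−1)|u₁′(x)|^p + λ₁|u₁(x)|^p = λ₁ for all x ∈ [a,b]. -/
open Real Set

noncomputable def psi (p t : ℝ) : ℝ := t * |t| ^ (p - 2)

theorem energy_identity (p a b lam : ℝ) (hp : 1 < p) (hab : a < b)
    (u u' : ℝ → ℝ)
    (hu'c : ContinuousOn u' (Icc a b))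
    (hderiv : ∀ x ∈ Icc a b, HasDerivWithinAt u (u' x) (Icc a b) x)
    (heq : ∀ x ∈ Icc a b,
      HasDerivWithinAt (fun y => psi p (u' y)) (-(lam * psi p (u x))) (Icc a b) x)
    (ha : u a = 0) (hb : u b = 0)
    (hpos : ∀ x ∈ Ioo a b, 0 < u x)
    (hle : ∀ x ∈ Icc a b, u x ≤ 1)
    (hmax : ∃ x ∈ Icc a b, u x = 1) :
    ∀ x ∈ Icc a b, (p - 1) * |u' x| ^ p + lam * |u x| ^ p = lam := by
  have hp1 : (0:ℝ) < p - 1 := by linarith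
  set q : ℝ := p / (p - 1) with hqdef
  have hq : 1 < q := (one_lt_div hp1).2 (by linarith)
  have hpq : (p - 1) * q = p := by rw [hqdef]; field_simp
  -- |psi p t| = |t| ^ (p-1)
  have habs : ∀ t : ℝ, |psi p t| = |t| ^ (p - 1) := by
    intro t
    rcases eq_or_ne t 0 with rfl | ht
    · simp [psi, Real.zero_rpow (ne_of_gt hp1)]
    · have h0 : (0:ℝ) < |t| := abs_pos.2 ht
      rw [psi, abs_mul, abs_of_nonneg (Real.rpow_nonneg (abs_nonneg t) _),
        ← Real.rpow_one_add' h0.le (by intro hc; linarith)]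
      ring_nf
  -- psi q (psi p t) = t
  have hinv : ∀ t : ℝ, psi q (psi p t) = t := by
    intro t
    rcases eq_or_ne t 0 with rfl | ht
    · simp [psi]
    · have h0 : (0:ℝ) < |t| := abs_pos.2 ht
      rw [psi, habs t, ← Real.rpow_mul (abs_nonneg t),
        show (p - 1) * (q - 2) = 2 - p by rw [hqdef]; field_simp; ring]
      rw [psi, mul_assoc, ← Real.rpow_add h0]
      norm_num
  -- |psi p t| ^ q = |t| ^ p
  have habsq : ∀ t : ℝ, |psi p t| ^ q = |t| ^ p := by
    intro t
    rw [habs t, ← Real.rpow_mul (abs_nonneg t), hpq]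
  -- energy function
  set E : ℝ → ℝ := fun x => (p - 1) * |psi p (u' x)| ^ q + lam * |u x| ^ p with hE
  have hEeq : ∀ x, E x = (p - 1) * |u' x| ^ p + lam * |u x| ^ p := by
    intro x; rw [hE]; simp only [habsq]
  have hE' : ∀ x ∈ Icc a b, HasDerivWithinAt E 0 (Icc a b) x := by
    intro x hx
    have d1 : HasDerivWithinAt (fun y => |psi p (u' y)| ^ q)
        (q * |psi p (u' x)| ^ (q - 2) * psi p (u' x) * (-(lam * psi p (u x)))) (Icc a b) x :=
      by have := (hasDerivAt_abs_rpow (psi p (u' x)) hq).comp_hasDerivWithinAt x (heq x hx); exact this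
    have d2 : HasDerivWithinAt (fun y => |u y| ^ p)
        (p * |u x| ^ (p - 2) * u x * u' x) (Icc a b) x :=
      (hasDerivAt_abs_rpow (u x) hp).comp_hasDerivWithinAt x (hderiv x hx)
    have := (d1.const_mul (p - 1)).add (d2.const_mul lam)
    refine this.congr_deriv ?_
    have key : |psi p (u' x)| ^ (q - 2) * psi p (u' x) = u' x := by
      have := hinv (u' x)
      rw [psi] at this
      linarith [this]
    rw [show q * |psi p (u' x)| ^ (q - 2) * psi p (u' x) * (-(lam * psi p (u x)))
        = q * (|psi p (u' x)| ^ (q - 2) * psi p (u' x)) * (-(lam * psi p (u x))) by ring, key]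
    have hPsi : |u x| ^ (p - 2) * u x = psi p (u x) := by rw [psi]; ring
    rw [show p * |u x| ^ (p - 2) * u x * u' x = p * (|u x| ^ (p - 2) * u x) * u' x by ring, hPsi]
    rw [show (p - 1) * (q * u' x * (-(lam * psi p (u x)))) =
        -((p - 1) * q) * (u' x * lam * psi p (u x)) by ring, hpq]
    ring
  have hEcont : ContinuousOn E (Icc a b) :=
    fun x hx => (hE' x hx).continuousWithinAt
  have hEconst : ∀ x ∈ Icc a b, E x = E a :=
    constant_of_has_deriv_right_zero hEcont (fun x hx =>
      (hE' x (Ico_subset_Icc_self hx)).mono_of_mem_nhdsWithin (Icc_mem_nhdsGE_of_mem hx))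
  -- max point
  obtain ⟨c, hc, hc1⟩ := hmax
  have hcIoo : c ∈ Ioo a b := by
    rcases eq_or_lt_of_le hc.1 with rfl | h1
    · exact absurd hc1 (by rw [ha]; norm_num)
    rcases eq_or_lt_of_le hc.2 with rfl | h2
    · exact absurd hc1 (by rw [hb]; norm_num)
    exact ⟨h1, h2⟩
  have hnhds : Icc a b ∈ nhds c := Icc_mem_nhds hcIoo.1 hcIoo.2
  have hdc : HasDerivAt u (u' c) c := (hderiv c hc).hasDerivAt hnhds
  have hmaxc : IsLocalMax u c := by
    filter_upwards [hnhds] with y hy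
    rw [hc1]; exact hle y hy
  have hu'c0 : u' c = 0 := hmaxc.hasDerivAt_eq_zero hdc
  have hEc : E c = lam := by
    rw [hEeq, hu'c0, hc1]
    simp [Real.zero_rpow (by positivity : p ≠ 0), Real.one_rpow]
  intro x hx
  rw [← hEeq, hEconst x hx, ← hEconst c hc, hEc]
end

section
/- (Monotone quotient lemma) Let f, g : [a,b] → ℝ be continuous on [a,b], differentiable on (a,b), with g′(x) ≠ 0 for all x ∈ (a,b). If f′/g′ is strictly decreasing on (a,b), then x ↦ (f(x)−f(a))/(g(x)−g(a)) and x ↦ (f(x)−f(b))/(g(x)−g(b)) are strictly decreasing on (a,b). -/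
open Set

private lemma cauchy_mvt {a b : ℝ} (hab : a < b) (f g f' g' : ℝ → ℝ)
    (hfc : ContinuousOn f (Icc a b)) (hgc : ContinuousOn g (Icc a b))
    (hf : ∀ x ∈ Ioo a b, HasDerivAt f (f' x) x)
    (hg : ∀ x ∈ Ioo a b, HasDerivAt g (g' x) x)
    {u v : ℝ} (hu : a ≤ u) (huv : u < v) (hv : v ≤ b) :
    ∃ c ∈ Ioo u v, (g v - g u) * f' c = (f v - f u) * g' c := by
  have hsub : Icc u v ⊆ Icc a b := Icc_subset_Icc hu hv
  have hsub' : Ioo u v ⊆ Ioo a b := Ioo_subset_Ioo hu hv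
  exact exists_ratio_hasDerivAt_eq_ratio_slope f f' huv (hfc.mono hsub)
    (fun x hx => hf x (hsub' hx)) g g' (hgc.mono hsub) (fun x hx => hg x (hsub' hx))

private lemma helper (a b : ℝ) (hab : a < b) (f g f' g' : ℝ → ℝ)
    (hfc : ContinuousOn f (Icc a b)) (hgc : ContinuousOn g (Icc a b))
    (hf : ∀ x ∈ Ioo a b, HasDerivAt f (f' x) x)
    (hg : ∀ x ∈ Ioo a b, HasDerivAt g (g' x) x)
    (hg' : ∀ x ∈ Ioo a b, 0 < g' x)
    (hanti : StrictAntiOn (fun x => f' x / g' x) (Ioo a b)) :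
    StrictAntiOn (fun x => (f x - f a) / (g x - g a)) (Ioo a b) ∧
    StrictAntiOn (fun x => (f x - f b) / (g x - g b)) (Ioo a b) := by
  have gmono : StrictMonoOn g (Icc a b) := by
    apply strictMonoOn_of_hasDerivWithinAt_pos (convex_Icc a b) hgc
    · intro x hx
      rw [interior_Icc] at hx ⊢
      exact (hg x hx).hasDerivWithinAt
    · intro x hx
      rw [interior_Icc] at hx
      exact hg' x hx
  constructor
  · intro x hx y hy hxy
    obtain ⟨c, hc, hceq⟩ := cauchy_mvt hab f g f' g' hfc hgc hf hg le_rfl hx.1 hx.2.le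
    obtain ⟨d, hd, hdeq⟩ := cauchy_mvt hab f g f' g' hfc hgc hf hg hx.1.le hxy hy.2.le
    have hc' : c ∈ Ioo a b := ⟨hc.1, hc.2.trans hx.2⟩
    have hd' : d ∈ Ioo a b := ⟨hx.1.trans hd.1, hd.2.trans_le hy.2.le⟩
    have hcd : c < d := hc.2.trans hd.1
    have hr : f' d / g' d < f' c / g' c := hanti hc' hd' hcd
    have hgc0 : 0 < g' c := hg' c hc'
    have hgd0 : 0 < g' d := hg' d hd'
    have hq1 : 0 < g x - g a := sub_pos.2 <| gmono ⟨le_rfl, hab.le⟩ ⟨hx.1.le, hx.2.le⟩ hx.1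
    have hq2 : 0 < g y - g x := sub_pos.2 <|
      gmono ⟨hx.1.le, hx.2.le⟩ ⟨hy.1.le, hy.2.le⟩ hxy
    have e1 : f x - f a = (g x - g a) * (f' c / g' c) := by
      field_simp
      linarith [hceq]
    have e2 : f y - f x = (g y - g x) * (f' d / g' d) := by
      field_simp
      linarith [hdeq]
    simp only
    rw [div_lt_div_iff₀ (by linarith) hq1]
    nlinarith [mul_pos hq2 hq1, sub_pos.2 hr, mul_pos (mul_pos hq2 hq1) (sub_pos.2 hr)]
  · intro x hx y hy hxy
    obtain ⟨d, hd, hdeq⟩ := cauchy_mvt hab f g f' g' hfc hgc hf hg hx.1.le hxy hy.2.le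
    obtain ⟨e, he, heeq⟩ := cauchy_mvt hab f g f' g' hfc hgc hf hg hy.1.le hy.2 le_rfl
    have hd' : d ∈ Ioo a b := ⟨hx.1.trans hd.1, hd.2.trans hy.2⟩
    have he' : e ∈ Ioo a b := ⟨hy.1.trans he.1, he.2⟩
    have hde : d < e := hd.2.trans he.1
    have hr : f' e / g' e < f' d / g' d := hanti hd' he' hde
    have hgd0 : 0 < g' d := hg' d hd'
    have hge0 : 0 < g' e := hg' e he'
    have hq1 : 0 < g y - g x := sub_pos.2 <|
      gmono ⟨hx.1.le, hx.2.le⟩ ⟨hy.1.le, hy.2.le⟩ hxy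
    have hq2 : 0 < g b - g y := sub_pos.2 <| gmono ⟨hy.1.le, hy.2.le⟩ ⟨hab.le, le_rfl⟩ hy.2
    have e1 : f y - f x = (g y - g x) * (f' d / g' d) := by
      field_simp
      linarith [hdeq]
    have e2 : f b - f y = (g b - g y) * (f' e / g' e) := by
      field_simp
      linarith [heeq]
    simp only
    rw [show (f y - f b)/(g y - g b) = (f b - f y)/(g b - g y) by
        rw [← neg_div_neg_eq]; ring_nf,
      show (f x - f b)/(g x - g b) = (f b - f x)/(g b - g x) by
        rw [← neg_div_neg_eq]; ring_nf,
      div_lt_div_iff₀ hq2 (by linarith)]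
    nlinarith [mul_pos hq1 hq2, sub_pos.2 hr, mul_pos (mul_pos hq1 hq2) (sub_pos.2 hr)]

theorem monotone_quotient_lemma (a b : ℝ) (hab : a < b) (f g f' g' : ℝ → ℝ)
    (hfc : ContinuousOn f (Icc a b)) (hgc : ContinuousOn g (Icc a b))
    (hf : ∀ x ∈ Ioo a b, HasDerivAt f (f' x) x)
    (hg : ∀ x ∈ Ioo a b, HasDerivAt g (g' x) x)
    (hg' : ∀ x ∈ Ioo a b, g' x ≠ 0)
    (hanti : StrictAntiOn (fun x => f' x / g' x) (Ioo a b)) :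
    StrictAntiOn (fun x => (f x - f a) / (g x - g a)) (Ioo a b) ∧
    StrictAntiOn (fun x => (f x - f b) / (g x - g b)) (Ioo a b) := by
  have dich := hasDerivWithinAt_forall_lt_or_forall_gt_of_forall_ne (convex_Ioo a b)
    (f' := g') (fun x hx => (hg x hx).hasDerivWithinAt) (m := 0) hg'
  rcases dich with hneg | hpos
  · have h := helper a b hab (fun x => -f x) (fun x => -g x) (fun x => -f' x)
      (fun x => -g' x) hfc.neg hgc.neg
      (fun x hx => (hf x hx).neg) (fun x hx => (hg x hx).neg)
      (fun x hx => by simpa using (hneg x hx))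
      (by
        have : (fun x => (-f' x) / (-g' x)) = fun x => f' x / g' x := by
          funext x; rw [neg_div_neg_eq]
        rw [this]; exact hanti)
    constructor
    · have := h.1
      have heq : ∀ x, (-f x - -f a) / (-g x - -g a) = (f x - f a) / (g x - g a) := by
        intro x
        rw [show -f x - -f a = -(f x - f a) by ring, show -g x - -g a = -(g x - g a) by ring,
          neg_div_neg_eq]
      intro x hx y hy hxy
      have := h.1 hx hy hxy
      simpa only [heq] using this
    · have heq : ∀ x, (-f x - -f b) / (-g x - -g b) = (f x - f b) / (g x - g b) := by
        intro x
        rw [show -f x - -f b = -(f x - f b) by ring, show -g x - -g b = -(g x - g b) by ring,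
          neg_div_neg_eq]
      intro x hx y hy hxy
      have := h.2 hx hy hxy
      simpa only [heq] using this
  · exact helper a b hab f g f' g' hfc hgc hf hg hpos hanti
end

section
/- For each n ≥ 1, the quotient φ_n/φ_{n+1} is strictly decreasing on (0, π_p/2], and its infimum over I_p equals φ_n(π_p/2)/φ_{n+1}(π_p/2) = ‖φ_n‖_∞/‖φ_{n+1}‖_∞, which is at least 1/‖φ₁‖_∞. -/
open Real Set

noncomputable def piP (p : ℝ) : ℝ := 2 * (p - 1) ^ (1/p) * ((π / p) / Real.sin (π / p))

noncomputable def phi (p : ℝ) : ℕ → ℝ → ℝ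
  | 0 => fun _ => 1
  | n + 1 => fun x => ∫ θ in (0:ℝ)..x,
      psi (p / (p - 1)) (∫ s in θ..(piP p / 2), psi p (phi p n s))

open intervalIntegral MeasureTheory

noncomputable def tl (p : ℝ) (n : ℕ) (θ : ℝ) : ℝ := ∫ s in θ..(piP p / 2), psi p (phi p n s)
noncomputable def dr (p : ℝ) (n : ℕ) (θ : ℝ) : ℝ := psi (p / (p - 1)) (tl p n θ)
lemma phi_succ' (p : ℝ) (n : ℕ) (x : ℝ) : phi p (n+1) x = ∫ θ in (0:ℝ)..x, dr p n θ := rfl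

lemma piP_half_pos {p : ℝ} (hp : 1 < p) : 0 < piP p / 2 := by
  have h1 : (0:ℝ) < π / p := div_pos pi_pos (by linarith)
  have h2 : π / p < π := by
    rw [div_lt_iff₀ (by linarith)]
    nlinarith [pi_pos]
  have hs : 0 < Real.sin (π / p) := Real.sin_pos_of_pos_of_lt_pi h1 h2
  have : 0 < (p - 1 : ℝ) ^ (1/p : ℝ) := Real.rpow_pos_of_pos (by linarith) _
  unfold piP
  positivity

lemma contRpowConst {q : ℝ} (hq : 0 < q) : Continuous fun x : ℝ => x ^ q :=
  continuous_iff_continuousAt.mpr fun x => Real.continuousAt_rpow_const x q (Or.inr hq.le)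

lemma psi_eq_rpow {q t : ℝ} (hq : q ≠ 1) (ht : 0 ≤ t) : psi q t = t ^ (q - 1) := by
  rcases eq_or_lt_of_le ht with h | h
  · simp [psi, ← h, Real.zero_rpow (show q - 1 ≠ 0 by intro h'; apply hq; linarith)]
  · rw [psi, abs_of_pos h]
    rw [show t * t ^ (q-2) = t ^ (1:ℝ) * t ^ (q-2) by rw [Real.rpow_one],
      ← Real.rpow_add h]
    ring_nf

section
variable {p : ℝ}

lemma q_pos (hp : 1 < p) : (0:ℝ) < 1 / (p - 1) := by
  have : (0:ℝ) < p - 1 := by linarith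
  positivity

lemma pq_ne_one (hp : 1 < p) : p / (p - 1) ≠ 1 := by
  have h : p - 1 ≠ 0 := by linarith
  intro hh
  rw [div_eq_one_iff_eq h] at hh
  linarith

lemma pq_sub_one (hp : 1 < p) : p / (p - 1) - 1 = 1 / (p - 1) := by
  have h : p - 1 ≠ 0 := by linarith
  field_simp
  ring

/-- The induction package of basic properties of `phi p n` on `[0, piP p / 2]`. -/
structure Pkg (p : ℝ) (n : ℕ) : Prop where
  cont : ContinuousOn (phi p n) (Icc 0 (piP p / 2))
  nonneg : ∀ x ∈ Icc 0 (piP p / 2), 0 ≤ phi p n x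
  mono : MonotoneOn (phi p n) (Icc 0 (piP p / 2))
  pos : ∀ x ∈ Ioc 0 (piP p / 2), 0 < phi p n x

lemma pkg_zero : Pkg p 0 := by
  refine ⟨continuousOn_const, fun x hx => by simp [phi], fun x hx y hy hxy => by simp [phi],
    fun x hx => by simp [phi]⟩

lemma psiphi_cont (hp : 1 < p) (h : Pkg p n) :
    ContinuousOn (fun s => psi p (phi p n s)) (Icc 0 (piP p / 2)) := by
  apply ContinuousOn.congr (f := fun s => (phi p n s) ^ (p - 1))
  · exact (contRpowConst (by linarith)).comp_continuousOn h.cont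
  · intro s hs; exact psi_eq_rpow (by linarith) (h.nonneg s hs)

lemma psiphi_nonneg (hp : 1 < p) (h : Pkg p n) :
    ∀ s ∈ Icc 0 (piP p / 2), 0 ≤ psi p (phi p n s) := by
  intro s hs
  rw [psi_eq_rpow (by linarith : p ≠ 1) (h.nonneg s hs)]
  exact Real.rpow_nonneg (h.nonneg s hs) _

lemma psiphi_pos (hp : 1 < p) (h : Pkg p n) :
    ∀ s ∈ Ioc 0 (piP p / 2), 0 < psi p (phi p n s) := by
  intro s hs
  rw [psi_eq_rpow (by linarith : p ≠ 1) (h.nonneg s (Ioc_subset_Icc_self hs))]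
  exact Real.rpow_pos_of_pos (h.pos s hs) _

lemma interval_integrable_of_contOn {f : ℝ → ℝ} {x y : ℝ}
    (hf : ContinuousOn f (Icc 0 (piP p / 2)))
    (hx : x ∈ Icc 0 (piP p / 2)) (hy : y ∈ Icc 0 (piP p / 2)) :
    IntervalIntegrable f MeasureTheory.volume x y :=
  (hf.mono (uIcc_subset_Icc hx hy)).intervalIntegrable

lemma tl_cont (hp : 1 < p) (h : Pkg p n) : ContinuousOn (tl p n) (Icc 0 (piP p / 2)) := by
  have := piP_half_pos hp
  have : ContinuousOn (fun x => ∫ t in x..(piP p / 2), psi p (phi p n t))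
      (uIcc 0 (piP p / 2)) := by
    apply continuousOn_primitive_interval_left
    rw [uIcc_of_le (by linarith)]
    exact (psiphi_cont hp h).integrableOn_Icc
  rwa [uIcc_of_le (by linarith)] at this

lemma tl_nonneg (hp : 1 < p) (h : Pkg p n) : ∀ x ∈ Icc 0 (piP p / 2), 0 ≤ tl p n x := by
  intro x hx
  apply integral_nonneg hx.2
  intro u hu
  exact psiphi_nonneg hp h u ⟨le_trans hx.1 hu.1, hu.2⟩

lemma tl_pos (hp : 1 < p) (h : Pkg p n) : ∀ x ∈ Ico 0 (piP p / 2), 0 < tl p n x := by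
  intro x hx
  apply intervalIntegral_pos_of_pos_on
  · exact interval_integrable_of_contOn (psiphi_cont hp h) ⟨hx.1, hx.2.le⟩
      (right_mem_Icc.mpr (by linarith [piP_half_pos hp]))
  · intro s hs
    exact psiphi_pos hp h s ⟨lt_of_le_of_lt hx.1 hs.1, hs.2.le⟩
  · exact hx.2

lemma tl_top (p : ℝ) (n : ℕ) : tl p n (piP p / 2) = 0 := integral_same

lemma dr_eq (hp : 1 < p) (h : Pkg p n) :
    ∀ x ∈ Icc 0 (piP p / 2), dr p n x = (tl p n x) ^ (1 / (p - 1)) := by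
  intro x hx
  rw [dr, psi_eq_rpow (pq_ne_one hp) (tl_nonneg hp h x hx), pq_sub_one hp]

lemma dr_cont (hp : 1 < p) (h : Pkg p n) : ContinuousOn (dr p n) (Icc 0 (piP p / 2)) := by
  apply ContinuousOn.congr (f := fun x => (tl p n x) ^ (1 / (p - 1)))
  · exact (contRpowConst (q_pos hp)).comp_continuousOn
      (tl_cont hp h)
  · exact dr_eq hp h

lemma dr_nonneg (hp : 1 < p) (h : Pkg p n) : ∀ x ∈ Icc 0 (piP p / 2), 0 ≤ dr p n x := by
  intro x hx
  rw [dr_eq hp h x hx]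
  exact Real.rpow_nonneg (tl_nonneg hp h x hx) _

lemma dr_pos (hp : 1 < p) (h : Pkg p n) : ∀ x ∈ Ico 0 (piP p / 2), 0 < dr p n x := by
  intro x hx
  rw [dr_eq hp h x (Ico_subset_Icc_self hx)]
  exact Real.rpow_pos_of_pos (tl_pos hp h x hx) _

lemma pkg_succ (hp : 1 < p) (h : Pkg p n) : Pkg p (n+1) := by
  have ha := piP_half_pos hp
  refine ⟨?_, ?_, ?_, ?_⟩
  · have : ContinuousOn (fun x => ∫ t in (0:ℝ)..x, dr p n t) (uIcc 0 (piP p / 2)) := by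
      apply continuousOn_primitive_interval
      rw [uIcc_of_le ha.le]
      exact (dr_cont hp h).integrableOn_Icc
    rw [uIcc_of_le ha.le] at this
    exact this.congr (fun y hy => phi_succ' p n y)
  · intro x hx
    rw [phi_succ']
    apply integral_nonneg hx.1
    intro u hu
    exact dr_nonneg hp h u ⟨hu.1, le_trans hu.2 hx.2⟩
  · intro x hx y hy hxy
    rw [phi_succ', phi_succ',
      ← integral_add_adjacent_intervals (b := x)
        (interval_integrable_of_contOn (dr_cont hp h) ⟨le_refl 0, ha.le⟩ hx)
        (interval_integrable_of_contOn (dr_cont hp h) hx hy)]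
    have : 0 ≤ ∫ t in x..y, dr p n t := by
      apply integral_nonneg hxy
      intro u hu
      exact dr_nonneg hp h u ⟨le_trans hx.1 hu.1, le_trans hu.2 hy.2⟩
    linarith
  · intro x hx
    rw [phi_succ']
    apply intervalIntegral_pos_of_pos_on
    · exact interval_integrable_of_contOn (dr_cont hp h) ⟨le_refl 0, ha.le⟩
        ⟨hx.1.le, hx.2⟩
    · intro s hs
      exact dr_pos hp h s ⟨hs.1.le, lt_of_lt_of_le hs.2 hx.2⟩
    · exact hx.1

lemma pkg (hp : 1 < p) (n : ℕ) : Pkg p n := by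
  induction n with
  | zero => exact pkg_zero
  | succ n ih => exact pkg_succ hp ih

lemma phi_succ_strict (hp : 1 < p) (h : Pkg p n) {x y : ℝ}
    (hx : x ∈ Icc 0 (piP p / 2)) (hy : y ∈ Icc 0 (piP p / 2)) (hxy : x < y) :
    phi p (n+1) x < phi p (n+1) y := by
  rw [phi_succ', phi_succ',
    ← integral_add_adjacent_intervals (b := x)
      (interval_integrable_of_contOn (dr_cont hp h) ⟨le_refl 0, (piP_half_pos hp).le⟩ hx)
      (interval_integrable_of_contOn (dr_cont hp h) hx hy)]
  have : 0 < ∫ t in x..y, dr p n t := by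
    apply intervalIntegral_pos_of_pos_on
      (interval_integrable_of_contOn (dr_cont hp h) hx hy) _ hxy
    intro s hs
    exact dr_pos hp h s ⟨le_trans hx.1 hs.1.le, lt_of_lt_of_le hs.2 hy.2⟩
  linarith

lemma phi_zero_at_zero (p : ℝ) (n : ℕ) : phi p (n+1) 0 = 0 := by
  rw [phi_succ']; exact integral_same

end
/-- Key comparison lemma for primitives from the left: if `f/g` is "ratio-decreasing",
then so is the ratio of the primitives. Stated multiplicatively. -/
lemma ratio_primitive {f g : ℝ → ℝ} {b : ℝ}
    (hf : ContinuousOn f (Icc 0 b)) (hg : ContinuousOn g (Icc 0 b))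
    (hgpos : ∀ x ∈ Ico 0 b, 0 < g x)
    (hratio : ∀ s t, 0 ≤ s → s ≤ t → t ≤ b → f t * g s ≤ f s * g t)
    (hstrict : ∀ s t, 0 ≤ s → s < t → t < b → f t * g s < f s * g t)
    {x y : ℝ} (hx : 0 < x) (hxy : x < y) (hy : y ≤ b) :
    (∫ t in (0:ℝ)..y, f t) * (∫ t in (0:ℝ)..x, g t) <
      (∫ t in (0:ℝ)..x, f t) * (∫ t in (0:ℝ)..y, g t) := by
  have hxb : x < b := lt_of_lt_of_le hxy hy
  have hxI : x ∈ Icc (0:ℝ) b := ⟨hx.le, hxb.le⟩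
  have hyI : y ∈ Icc (0:ℝ) b := ⟨(hx.trans hxy).le, hy⟩
  have h0I : (0:ℝ) ∈ Icc (0:ℝ) b := ⟨le_refl 0, (hx.trans hxb).le⟩
  have hIf0x : IntervalIntegrable f volume 0 x :=
    (hf.mono (uIcc_subset_Icc h0I hxI)).intervalIntegrable
  have hIg0x : IntervalIntegrable g volume 0 x :=
    (hg.mono (uIcc_subset_Icc h0I hxI)).intervalIntegrable
  have hIfxy : IntervalIntegrable f volume x y :=
    (hf.mono (uIcc_subset_Icc hxI hyI)).intervalIntegrable
  have hIgxy : IntervalIntegrable g volume x y :=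
    (hg.mono (uIcc_subset_Icc hxI hyI)).intervalIntegrable
  set F : ℝ := ∫ t in (0:ℝ)..x, f t with hF
  set G : ℝ := ∫ t in (0:ℝ)..x, g t with hG
  set Fxy : ℝ := ∫ t in x..y, f t with hFxy
  set Gxy : ℝ := ∫ t in x..y, g t with hGxy
  have hsplitf : (∫ t in (0:ℝ)..y, f t) = F + Fxy :=
    (integral_add_adjacent_intervals hIf0x hIfxy).symm
  have hsplitg : (∫ t in (0:ℝ)..y, g t) = G + Gxy :=
    (integral_add_adjacent_intervals hIg0x hIgxy).symm
  rw [hsplitf, hsplitg]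
  -- (i) : f x * G < F * g x
  have hi : f x * G < F * g x := by
    have : (∫ s in (0:ℝ)..x, f x * g s) < ∫ s in (0:ℝ)..x, f s * g x := by
      apply integral_lt_integral_of_continuousOn_of_le_of_exists_lt hx
      · exact continuousOn_const.mul (hg.mono (Icc_subset_Icc le_rfl hxb.le))
      · exact (hf.mono (Icc_subset_Icc le_rfl hxb.le)).mul continuousOn_const
      · intro s hs
        rcases eq_or_lt_of_le hs.2 with h | h
        · exact le_of_eq (by rw [h])
        · linarith [hratio s x hs.1.le h.le hxb.le]
      · exact ⟨0, ⟨le_refl 0, hx.le⟩, by linarith [hstrict 0 x (le_refl 0) hx hxb]⟩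
    rwa [intervalIntegral.integral_const_mul, intervalIntegral.integral_mul_const] at this
  -- (ii) : g x * Fxy ≤ f x * Gxy
  have hii : Fxy * g x ≤ f x * Gxy := by
    have : (∫ t in x..y, f t * g x) ≤ ∫ t in x..y, f x * g t := by
      apply integral_mono_on hxy.le (hIfxy.mul_const _) (hIgxy.const_mul _)
      intro t ht
      rcases eq_or_lt_of_le ht.1 with h | h
      · exact le_of_eq (by rw [← h])
      · exact hratio x t hx.le h.le (le_trans ht.2 hy)
    rwa [intervalIntegral.integral_mul_const, intervalIntegral.integral_const_mul] at this
  have hG0 : 0 ≤ G := by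
    apply integral_nonneg hx.le
    intro u hu; exact (hgpos u ⟨hu.1, lt_of_le_of_lt hu.2 hxb⟩).le
  have hGxy0 : 0 < Gxy := by
    apply intervalIntegral_pos_of_pos_on hIgxy _ hxy
    intro s hs; exact hgpos s ⟨le_trans hx.le hs.1.le, lt_of_lt_of_le hs.2 hy⟩
  have hgx : 0 < g x := hgpos x ⟨hx.le, hxb⟩
  nlinarith [mul_lt_mul_of_pos_right hi hGxy0, mul_le_mul_of_nonneg_right hii hG0]

/-- Key comparison lemma for tail integrals. -/
lemma ratio_tail {f g : ℝ → ℝ} {b : ℝ}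
    (hf : ContinuousOn f (Icc 0 b)) (hg : ContinuousOn g (Icc 0 b))
    (hgpos : ∀ x ∈ Ioc 0 b, 0 < g x) (hgnonneg : ∀ x ∈ Icc 0 b, 0 ≤ g x)
    (hratio : ∀ s t, 0 ≤ s → s ≤ t → t ≤ b → f t * g s ≤ f s * g t)
    (hstrict : ∀ s t, 0 < s → s < t → t ≤ b → f t * g s < f s * g t)
    {x y : ℝ} (hx : 0 ≤ x) (hxy : x < y) (hy : y < b) :
    (∫ t in y..b, f t) * (∫ t in x..b, g t) <
      (∫ t in x..b, f t) * (∫ t in y..b, g t) := by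
  have hyI : y ∈ Icc (0:ℝ) b := ⟨hx.trans hxy.le, hy.le⟩
  have hxI : x ∈ Icc (0:ℝ) b := ⟨hx, (hxy.trans hy).le⟩
  have hbI : b ∈ Icc (0:ℝ) b := ⟨hx.trans (hxy.trans hy).le, le_refl b⟩
  have hIfxy : IntervalIntegrable f volume x y :=
    (hf.mono (uIcc_subset_Icc hxI hyI)).intervalIntegrable
  have hIgxy : IntervalIntegrable g volume x y :=
    (hg.mono (uIcc_subset_Icc hxI hyI)).intervalIntegrable
  have hIfyb : IntervalIntegrable f volume y b :=
    (hf.mono (uIcc_subset_Icc hyI hbI)).intervalIntegrable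
  have hIgyb : IntervalIntegrable g volume y b :=
    (hg.mono (uIcc_subset_Icc hyI hbI)).intervalIntegrable
  set Fb : ℝ := ∫ t in y..b, f t with hFb
  set Gb : ℝ := ∫ t in y..b, g t with hGb
  set Fxy : ℝ := ∫ t in x..y, f t with hFxy
  set Gxy : ℝ := ∫ t in x..y, g t with hGxy
  have hsplitf : (∫ t in x..b, f t) = Fxy + Fb :=
    (integral_add_adjacent_intervals hIfxy hIfyb).symm
  have hsplitg : (∫ t in x..b, g t) = Gxy + Gb :=
    (integral_add_adjacent_intervals hIgxy hIgyb).symm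
  rw [hsplitf, hsplitg]
  have hy0 : 0 < y := lt_of_le_of_lt hx hxy
  -- (i) : Fb * g y ≤ f y * Gb
  have hi : Fb * g y ≤ f y * Gb := by
    have : (∫ t in y..b, f t * g y) ≤ ∫ t in y..b, f y * g t := by
      apply integral_mono_on hy.le (hIfyb.mul_const _) (hIgyb.const_mul _)
      intro t ht
      rcases eq_or_lt_of_le ht.1 with h | h
      · exact le_of_eq (by rw [← h])
      · exact hratio y t hy0.le h.le ht.2
    rwa [intervalIntegral.integral_mul_const, intervalIntegral.integral_const_mul] at this
  -- (ii) : f y * Gxy < Fxy * g y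
  have hii : f y * Gxy < Fxy * g y := by
    have : (∫ s in x..y, f y * g s) < ∫ s in x..y, f s * g y := by
      apply integral_lt_integral_of_continuousOn_of_le_of_exists_lt hxy
      · exact continuousOn_const.mul (hg.mono (Icc_subset_Icc hx hyI.2))
      · exact (hf.mono (Icc_subset_Icc hx hyI.2)).mul continuousOn_const
      · intro s hs
        rcases eq_or_lt_of_le hs.2 with h | h
        · exact le_of_eq (by rw [h])
        · linarith [hratio s y (le_trans hx hs.1.le) h.le hy.le]
      · refine ⟨(x+y)/2, ⟨by linarith, by linarith⟩, ?_⟩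
        linarith [hstrict ((x+y)/2) y (by linarith) (by linarith) hy.le]
    rwa [intervalIntegral.integral_const_mul, intervalIntegral.integral_mul_const] at this
  have hGb0 : 0 < Gb := by
    apply intervalIntegral_pos_of_pos_on hIgyb _ hy
    intro s hs; exact hgpos s ⟨hy0.trans hs.1, hs.2.le⟩
  have hGxy0 : 0 ≤ Gxy := by
    apply integral_nonneg hxy.le
    intro u hu
    exact hgnonneg u ⟨le_trans hx hu.1, by linarith [hu.2, hy.le]⟩
  have hgy : 0 < g y := hgpos y ⟨hy0, hy.le⟩
  nlinarith [mul_lt_mul_of_pos_right hii hGb0, mul_le_mul_of_nonneg_right hi hGxy0]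

section
variable {p : ℝ}

/-- The key ratio-monotonicity invariant. -/
lemma ratQ (hp : 1 < p) (n : ℕ) :
    (∀ s t, 0 ≤ s → s ≤ t → t ≤ piP p / 2 →
      phi p n t * phi p (n+1) s ≤ phi p n s * phi p (n+1) t) ∧
    (∀ s t, 0 < s → s < t → t ≤ piP p / 2 →
      phi p n t * phi p (n+1) s < phi p n s * phi p (n+1) t) := by
  have hA := piP_half_pos hp
  induction n with
  | zero =>
    have h0 : ∀ x : ℝ, phi p 0 x = 1 := fun x => rfl
    constructor
    · intro s t hs hst htA
      rw [h0, h0, one_mul, one_mul]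
      exact (pkg hp 1).mono ⟨hs, by linarith⟩ ⟨by linarith, htA⟩ hst
    · intro s t hs hst htA
      rw [h0, h0, one_mul, one_mul]
      exact phi_succ_strict hp pkg_zero ⟨hs.le, by linarith⟩ ⟨by linarith, htA⟩ hst
  | succ n ih =>
    have hpk := pkg hp n
    have hpk1 := pkg hp (n+1)
    have hp1 : (0:ℝ) < p - 1 := by linarith
    -- ratio inequalities for psi p ∘ phi
    have hfr : ∀ s t, 0 ≤ s → s ≤ t → t ≤ piP p / 2 →
        psi p (phi p n t) * psi p (phi p (n+1) s) ≤
          psi p (phi p n s) * psi p (phi p (n+1) t) := by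
      intro s t hs hst htA
      have hsI : s ∈ Icc 0 (piP p / 2) := ⟨hs, by linarith⟩
      have htI : t ∈ Icc 0 (piP p / 2) := ⟨by linarith, htA⟩
      rw [psi_eq_rpow (by linarith : p ≠ 1) (hpk.nonneg t htI),
        psi_eq_rpow (by linarith : p ≠ 1) (hpk1.nonneg s hsI),
        psi_eq_rpow (by linarith : p ≠ 1) (hpk.nonneg s hsI),
        psi_eq_rpow (by linarith : p ≠ 1) (hpk1.nonneg t htI),
        ← Real.mul_rpow (hpk.nonneg t htI) (hpk1.nonneg s hsI),
        ← Real.mul_rpow (hpk.nonneg s hsI) (hpk1.nonneg t htI)]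
      exact Real.rpow_le_rpow (mul_nonneg (hpk.nonneg t htI) (hpk1.nonneg s hsI))
        (ih.1 s t hs hst htA) (by linarith)
    have hfs : ∀ s t, 0 < s → s < t → t ≤ piP p / 2 →
        psi p (phi p n t) * psi p (phi p (n+1) s) <
          psi p (phi p n s) * psi p (phi p (n+1) t) := by
      intro s t hs hst htA
      have hsI : s ∈ Icc 0 (piP p / 2) := ⟨hs.le, by linarith⟩
      have htI : t ∈ Icc 0 (piP p / 2) := ⟨by linarith, htA⟩
      rw [psi_eq_rpow (by linarith : p ≠ 1) (hpk.nonneg t htI),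
        psi_eq_rpow (by linarith : p ≠ 1) (hpk1.nonneg s hsI),
        psi_eq_rpow (by linarith : p ≠ 1) (hpk.nonneg s hsI),
        psi_eq_rpow (by linarith : p ≠ 1) (hpk1.nonneg t htI),
        ← Real.mul_rpow (hpk.nonneg t htI) (hpk1.nonneg s hsI),
        ← Real.mul_rpow (hpk.nonneg s hsI) (hpk1.nonneg t htI)]
      exact Real.rpow_lt_rpow (mul_nonneg (hpk.nonneg t htI) (hpk1.nonneg s hsI))
        (ih.2 s t hs hst htA) (by linarith)
    -- tail ratio inequalities
    have htls : ∀ s t, 0 ≤ s → s < t → t < piP p / 2 →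
        tl p n t * tl p (n+1) s < tl p n s * tl p (n+1) t := by
      intro s t hs hst htA
      exact ratio_tail (psiphi_cont hp hpk) (psiphi_cont hp hpk1)
        (psiphi_pos hp hpk1) (psiphi_nonneg hp hpk1) hfr hfs hs hst htA
    have htlr : ∀ s t, 0 ≤ s → s ≤ t → t ≤ piP p / 2 →
        tl p n t * tl p (n+1) s ≤ tl p n s * tl p (n+1) t := by
      intro s t hs hst htA
      rcases eq_or_lt_of_le hst with h | h
      · rw [h]
      rcases eq_or_lt_of_le htA with h2 | h2
      · rw [h2, tl_top, tl_top, zero_mul, mul_zero]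
      · exact (htls s t hs h h2).le
    -- ratio inequalities for dr
    have hq1 : (0:ℝ) < 1 / (p - 1) := q_pos hp
    have hdrr : ∀ s t, 0 ≤ s → s ≤ t → t ≤ piP p / 2 →
        dr p n t * dr p (n+1) s ≤ dr p n s * dr p (n+1) t := by
      intro s t hs hst htA
      have hsI : s ∈ Icc 0 (piP p / 2) := ⟨hs, by linarith⟩
      have htI : t ∈ Icc 0 (piP p / 2) := ⟨by linarith, htA⟩
      rw [dr_eq hp hpk t htI, dr_eq hp hpk1 s hsI, dr_eq hp hpk s hsI,
        dr_eq hp hpk1 t htI,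
        ← Real.mul_rpow (tl_nonneg hp hpk t htI) (tl_nonneg hp hpk1 s hsI),
        ← Real.mul_rpow (tl_nonneg hp hpk s hsI) (tl_nonneg hp hpk1 t htI)]
      exact Real.rpow_le_rpow
        (mul_nonneg (tl_nonneg hp hpk t htI) (tl_nonneg hp hpk1 s hsI))
        (htlr s t hs hst htA) hq1.le
    have hdrs : ∀ s t, 0 ≤ s → s < t → t < piP p / 2 →
        dr p n t * dr p (n+1) s < dr p n s * dr p (n+1) t := by
      intro s t hs hst htA
      have hsI : s ∈ Icc 0 (piP p / 2) := ⟨hs, by linarith⟩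
      have htI : t ∈ Icc 0 (piP p / 2) := ⟨by linarith, htA.le⟩
      rw [dr_eq hp hpk t htI, dr_eq hp hpk1 s hsI, dr_eq hp hpk s hsI,
        dr_eq hp hpk1 t htI,
        ← Real.mul_rpow (tl_nonneg hp hpk t htI) (tl_nonneg hp hpk1 s hsI),
        ← Real.mul_rpow (tl_nonneg hp hpk s hsI) (tl_nonneg hp hpk1 t htI)]
      exact Real.rpow_lt_rpow
        (mul_nonneg (tl_nonneg hp hpk t htI) (tl_nonneg hp hpk1 s hsI))
        (htls s t hs hst htA) hq1
    constructor
    · intro s t hs hst htA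
      rcases eq_or_lt_of_le hst with h | h
      · rw [h]
      rcases eq_or_lt_of_le hs with h2 | h2
      · rw [← h2, phi_zero_at_zero, phi_zero_at_zero, zero_mul, mul_zero]
      · refine le_of_lt ?_
        rw [phi_succ' p (n+1) s, phi_succ' p (n+1) t, phi_succ' p n s, phi_succ' p n t]
        exact ratio_primitive (dr_cont hp hpk) (dr_cont hp hpk1) (dr_pos hp hpk1)
          hdrr hdrs h2 h htA
    · intro s t hs hst htA
      rw [phi_succ' p (n+1) s, phi_succ' p (n+1) t, phi_succ' p n s, phi_succ' p n t]
      exact ratio_primitive (dr_cont hp hpk) (dr_cont hp hpk1) (dr_pos hp hpk1)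
        hdrr hdrs hs hst htA

lemma sSup_abs_phi (hp : 1 < p) (n : ℕ) :
    sSup ((fun x => |phi p n x|) '' Icc 0 (piP p / 2)) = phi p n (piP p / 2) := by
  have hA := piP_half_pos hp
  have hpk := pkg hp n
  have hAI : piP p / 2 ∈ Icc 0 (piP p / 2) := right_mem_Icc.mpr hA.le
  apply IsGreatest.csSup_eq
  constructor
  · exact ⟨piP p / 2, hAI, abs_of_nonneg (hpk.nonneg _ hAI)⟩
  · rintro z ⟨x, hx, rfl⟩
    show |phi p n x| ≤ phi p n (piP p / 2)
    rw [abs_of_nonneg (hpk.nonneg x hx)]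
    exact hpk.mono hx hAI hx.2

lemma tl_zero_eq (hp : 1 < p) {θ : ℝ} : tl p 0 θ = piP p / 2 - θ := by
  have : ∀ s : ℝ, psi p (phi p 0 s) = 1 := by
    intro s
    show psi p 1 = 1
    simp [psi]
  rw [tl]
  simp only [this]
  simp

lemma phi_one_eq (hp : 1 < p) :
    phi p 1 (piP p / 2) = ∫ θ in (0:ℝ)..(piP p / 2), (piP p / 2 - θ) ^ (1 / (p-1)) := by
  rw [phi_succ']
  apply integral_congr
  intro θ hθ
  rw [uIcc_of_le (piP_half_pos hp).le] at hθ
  show dr p 0 θ = _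
  rw [dr, tl_zero_eq hp, psi_eq_rpow (pq_ne_one hp) (by linarith [hθ.2]), pq_sub_one hp]
end

section
variable {p : ℝ}

lemma phi_top_bound (hp : 1 < p) (n : ℕ) :
    phi p (n+1) (piP p / 2) ≤ phi p n (piP p / 2) * phi p 1 (piP p / 2) := by
  have hA := piP_half_pos hp
  have hpk := pkg hp n
  have hAI : piP p / 2 ∈ Icc 0 (piP p / 2) := right_mem_Icc.mpr hA.le
  have hcont : Continuous fun θ : ℝ => (piP p / 2 - θ) ^ (1/(p-1)) :=
    (contRpowConst (q_pos hp)).comp (continuous_const.sub continuous_id)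
  have hbd : ∀ θ ∈ Icc 0 (piP p / 2),
      dr p n θ ≤ phi p n (piP p / 2) * (piP p / 2 - θ) ^ (1/(p-1)) := by
    intro θ hθ
    have htl : tl p n θ ≤ (phi p n (piP p / 2)) ^ (p-1) * (piP p / 2 - θ) := by
      have h2 : tl p n θ ≤ ∫ _ in θ..(piP p / 2), (phi p n (piP p / 2)) ^ (p-1) := by
        apply integral_mono_on hθ.2
          (interval_integrable_of_contOn (psiphi_cont hp hpk) hθ hAI)
          intervalIntegrable_const
        intro s hs
        have hsI : s ∈ Icc 0 (piP p / 2) := ⟨le_trans hθ.1 hs.1, hs.2⟩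
        rw [psi_eq_rpow (by linarith : p ≠ 1) (hpk.nonneg s hsI)]
        exact Real.rpow_le_rpow (hpk.nonneg s hsI) (hpk.mono hsI hAI hs.2) (by linarith)
      rwa [intervalIntegral.integral_const, smul_eq_mul, mul_comm] at h2
    rw [dr_eq hp hpk θ hθ]
    calc (tl p n θ) ^ (1/(p-1))
        ≤ ((phi p n (piP p / 2)) ^ (p-1) * (piP p / 2 - θ)) ^ (1/(p-1)) :=
          Real.rpow_le_rpow (tl_nonneg hp hpk θ hθ) htl (q_pos hp).le
      _ = phi p n (piP p / 2) * (piP p / 2 - θ) ^ (1/(p-1)) := by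
          rw [Real.mul_rpow (Real.rpow_nonneg (hpk.nonneg _ hAI) _) (by linarith [hθ.2]),
            ← Real.rpow_mul (hpk.nonneg _ hAI),
            mul_one_div_cancel (by linarith : p - 1 ≠ 0), Real.rpow_one]
  calc phi p (n+1) (piP p / 2) = ∫ θ in (0:ℝ)..(piP p / 2), dr p n θ := phi_succ' p n _
    _ ≤ ∫ θ in (0:ℝ)..(piP p / 2), phi p n (piP p / 2) * (piP p / 2 - θ) ^ (1/(p-1)) := by
        apply integral_mono_on hA.le
          (interval_integrable_of_contOn (dr_cont hp hpk) (left_mem_Icc.mpr hA.le) hAI)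
          ((continuous_const.mul hcont).intervalIntegrable _ _) hbd
    _ = phi p n (piP p / 2) * phi p 1 (piP p / 2) := by
        rw [intervalIntegral.integral_const_mul, ← phi_one_eq hp]

end


theorem phi_quotient_strictAnti_inf (p : ℝ) (hp : 1 < p) :
    ∀ n : ℕ, 1 ≤ n →
      StrictAntiOn (fun x => phi p n x / phi p (n + 1) x) (Ioc 0 (piP p / 2)) ∧
      sInf ((fun x => phi p n x / phi p (n + 1) x) '' Ioc 0 (piP p / 2)) =
        phi p n (piP p / 2) / phi p (n + 1) (piP p / 2) ∧
      phi p n (piP p / 2) / phi p (n + 1) (piP p / 2) =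
        sSup ((fun x => |phi p n x|) '' Icc 0 (piP p / 2)) /
          sSup ((fun x => |phi p (n + 1) x|) '' Icc 0 (piP p / 2)) ∧
      1 / sSup ((fun x => |phi p 1 x|) '' Icc 0 (piP p / 2)) ≤
        phi p n (piP p / 2) / phi p (n + 1) (piP p / 2) := by
  intro n _hn
  have hA := piP_half_pos hp
  have hQ := ratQ hp n
  have hpk1 := pkg hp (n+1)
  have hAIoc : piP p / 2 ∈ Ioc 0 (piP p / 2) := right_mem_Ioc.mpr hA
  have hanti : StrictAntiOn (fun x => phi p n x / phi p (n + 1) x) (Ioc 0 (piP p / 2)) := by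
    intro x hx y hy hxy
    show phi p n y / phi p (n+1) y < phi p n x / phi p (n+1) x
    rw [div_lt_div_iff₀ (hpk1.pos y hy) (hpk1.pos x hx)]
    exact hQ.2 x y hx.1 hxy hy.2
  refine ⟨hanti, ?_, ?_, ?_⟩
  · apply IsLeast.csInf_eq
    constructor
    · exact ⟨piP p / 2, hAIoc, rfl⟩
    · rintro z ⟨x, hx, rfl⟩
      rcases eq_or_lt_of_le hx.2 with h | h
      · rw [h]
      · exact (hanti hx hAIoc h).le
  · rw [sSup_abs_phi hp n, sSup_abs_phi hp (n+1)]
  · rw [sSup_abs_phi hp 1,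
      div_le_div_iff₀ ((pkg hp 1).pos _ hAIoc) (hpk1.pos _ hAIoc), one_mul]
    exact phi_top_bound hp n
end

section
/- For each n ≥ 1, sup over I_p of φ_n/φ_{n+1} equals lim_{x→0⁺} φ_n(x)/φ_{n+1}(x) = ψ_{p′}( ∫₀^{π_p/2} ψ_p(φ_{n−1}(s)) ds / ∫₀^{π_p/2} ψ_p(φ_n(s)) ds ), and this supremum is finite and nonincreasing in n for n ≥ 2. -/
open Real Set

open Filter

namespace PhiAux

lemma psi_of_nonneg {q : ℝ} (hq : q ≠ 1) {t : ℝ} (ht : 0 ≤ t) : psi q t = t ^ (q - 1) := by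
  rcases eq_or_lt_of_le ht with h | h
  · rw [← h, Real.zero_rpow (sub_ne_zero.mpr hq : q - 1 ≠ 0)]
    simp [psi]
  · rw [psi, abs_of_pos h]
    rw [show t * t ^ (q - 2) = t ^ (1:ℝ) * t ^ (q - 2) by rw [Real.rpow_one],
      ← Real.rpow_add h]
    ring_nf

lemma continuous_psi {q : ℝ} (hq : 1 < q) : Continuous (psi q) := by
  rw [continuous_iff_continuousAt]
  intro t
  rcases eq_or_ne t 0 with rfl | ht
  · have h0 : psi q 0 = 0 := by simp [psi]
    rw [ContinuousAt, h0]
    apply squeeze_zero_norm (a := fun t => |t| ^ (q - 1))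
    · intro t
      rcases eq_or_ne t 0 with rfl | ht
      · simp [psi, Real.zero_rpow (by linarith : q - 1 ≠ 0)]
      · have habs : (0:ℝ) < |t| := abs_pos.mpr ht
        have : ‖psi q t‖ = |t| * |t| ^ (q - 2) := by
          rw [psi, Real.norm_eq_abs, abs_mul, abs_of_nonneg (Real.rpow_nonneg (abs_nonneg t) _)]
        rw [this, show |t| * |t| ^ (q - 2) = |t| ^ (1:ℝ) * |t| ^ (q - 2) by rw [Real.rpow_one],
          ← Real.rpow_add habs]
        exact le_of_eq (by ring_nf)
    · have hc : ContinuousAt (fun s : ℝ => s ^ (q - 1)) 0 :=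
        Real.continuousAt_rpow_const 0 (q - 1) (Or.inr (by linarith))
      have hc' : ContinuousAt (fun s : ℝ => s ^ (q - 1)) |0| := by simpa using hc
      have h2 := hc'.comp continuous_abs.continuousAt (x := 0)
      have h3 : Tendsto (fun t : ℝ => |t| ^ (q - 1)) (nhds 0) (nhds (|(0:ℝ)| ^ (q - 1))) := h2
      simpa [Real.zero_rpow (by linarith : q - 1 ≠ 0)] using h3
  · exact continuousAt_id.mul
      ((Real.continuousAt_rpow_const |t| (q - 2) (Or.inl (abs_ne_zero.mpr ht))).comp
        continuous_abs.continuousAt)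


lemma psi_nonneg {q : ℝ} (hq : 1 < q) {t : ℝ} (ht : 0 ≤ t) : 0 ≤ psi q t := by
  rw [psi_of_nonneg hq.ne' ht]; exact Real.rpow_nonneg ht _

lemma psi_pos {q : ℝ} (hq : 1 < q) {t : ℝ} (ht : 0 < t) : 0 < psi q t := by
  rw [psi_of_nonneg hq.ne' ht.le]; exact Real.rpow_pos_of_pos ht _

section P
variable {p : ℝ} (hp : 1 < p)
include hp

noncomputable def F (p : ℝ) (n : ℕ) (x : ℝ) : ℝ := ∫ s in x..(piP p / 2), psi p (phi p n s)

lemma hq1 : 1 < p / (p - 1) := by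
  rw [lt_div_iff₀ (by linarith)]; linarith

lemma hT : 0 < piP p / 2 := by
  have h1 : (0:ℝ) < π / p := div_pos Real.pi_pos (by linarith)
  have h2 : 0 < Real.sin (π / p) := by
    apply Real.sin_pos_of_pos_of_lt_pi h1
    rw [div_lt_iff₀ (by linarith : (0:ℝ) < p)]
    nlinarith [Real.pi_pos]
  have h3 : (0:ℝ) < (p - 1) ^ (1/p) := Real.rpow_pos_of_pos (by linarith) _
  have : 0 < piP p := by
    unfold piP; positivity
  linarith

omit hp in
lemma phi_succ (n : ℕ) : phi p (n + 1) = fun x => ∫ θ in (0:ℝ)..x, psi (p/(p-1)) (F p n θ) :=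
  rfl

omit hp in
lemma hasDerivAt_left_integral {f : ℝ → ℝ} (hf : Continuous f) (b x : ℝ) :
    HasDerivAt (fun u => ∫ s in u..b, f s) (-f x) x :=
  (intervalIntegral.integral_hasStrictDerivAt_left (hf.intervalIntegrable _ _)
    (hf.stronglyMeasurableAtFilter _ _) hf.continuousAt).hasDerivAt

lemma continuous_phi_and_F : ∀ n, Continuous (phi p n) ∧ Continuous (F p n) := by
  intro n
  induction n with
  | zero =>
      refine ⟨continuous_const, ?_⟩
      have h : Continuous fun s => psi p (phi p 0 s) := (continuous_psi hp).comp continuous_const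
      exact continuous_iff_continuousAt.mpr fun x =>
        (hasDerivAt_left_integral h (piP p / 2) x).continuousAt
  | succ n ih =>
      have hψF : Continuous fun θ => psi (p/(p-1)) (F p n θ) :=
        (continuous_psi (hq1 hp)).comp ih.2
      have hphi : Continuous (phi p (n + 1)) := by
        rw [phi_succ]
        exact continuous_iff_continuousAt.mpr fun x =>
          (hψF.integral_hasStrictDerivAt 0 x).hasDerivAt.continuousAt
      refine ⟨hphi, ?_⟩
      have h : Continuous fun s => psi p (phi p (n+1) s) := (continuous_psi hp).comp hphi
      exact continuous_iff_continuousAt.mpr fun x =>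
        (hasDerivAt_left_integral h (piP p / 2) x).continuousAt

lemma continuous_phi (n : ℕ) : Continuous (phi p n) := (continuous_phi_and_F hp n).1

lemma continuous_F (n : ℕ) : Continuous (F p n) := (continuous_phi_and_F hp n).2

lemma hasDerivAt_F (n : ℕ) (x : ℝ) : HasDerivAt (F p n) (-(psi p (phi p n x))) x :=
  hasDerivAt_left_integral ((continuous_psi hp).comp (continuous_phi hp n)) _ x

lemma hasDerivAt_phi (n : ℕ) (x : ℝ) :
    HasDerivAt (phi p (n + 1)) (psi (p/(p-1)) (F p n x)) x := by
  rw [phi_succ]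
  exact (((continuous_psi (hq1 hp)).comp (continuous_F hp n)).integral_hasStrictDerivAt
    0 x).hasDerivAt


lemma phi_nonneg_pos : ∀ n, (∀ x ∈ Icc 0 (piP p / 2), 0 ≤ phi p n x) ∧
    (∀ x ∈ Ioc 0 (piP p / 2), 0 < phi p n x) := by
  intro n
  induction n with
  | zero => exact ⟨fun x _ => by simp [phi], fun x _ => by simp [phi]⟩
  | succ n ih =>
      have hInt : Continuous fun s => psi p (phi p n s) :=
        (continuous_psi hp).comp (continuous_phi hp n)
      have hFnonneg : ∀ x ∈ Icc 0 (piP p / 2), 0 ≤ F p n x := by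
        intro x hx
        apply intervalIntegral.integral_nonneg hx.2
        intro s hs
        exact psi_nonneg hp (ih.1 s ⟨le_trans hx.1 hs.1, hs.2⟩)
      have hFpos : ∀ x ∈ Ico 0 (piP p / 2), 0 < F p n x := by
        intro x hx
        apply intervalIntegral.intervalIntegral_pos_of_pos_on
          (hInt.intervalIntegrable _ _) ?_ hx.2
        intro s hs
        rcases n with _ | m
        · simpa [phi] using psi_pos hp (by norm_num : (0:ℝ) < 1)
        · exact psi_pos hp (ih.2 s ⟨lt_of_le_of_lt hx.1 hs.1, hs.2.le⟩)
      constructor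
      · intro x hx
        rw [phi_succ]
        apply intervalIntegral.integral_nonneg hx.1
        intro u hu
        exact psi_nonneg (hq1 hp) (hFnonneg u ⟨hu.1, le_trans hu.2 hx.2⟩)
      · intro x hx
        rw [phi_succ]
        apply intervalIntegral.intervalIntegral_pos_of_pos_on
          (((continuous_psi (hq1 hp)).comp (continuous_F hp n)).intervalIntegrable _ _) ?_ hx.1
        intro θ hθ
        exact psi_pos (hq1 hp) (hFpos θ ⟨hθ.1.le, lt_of_lt_of_le hθ.2 hx.2⟩)

lemma phi_nonneg (n : ℕ) : ∀ x ∈ Icc 0 (piP p / 2), 0 ≤ phi p n x := (phi_nonneg_pos hp n).1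

lemma phi_pos (n : ℕ) : ∀ x ∈ Ioc 0 (piP p / 2), 0 < phi p n x := (phi_nonneg_pos hp n).2

lemma F_nonneg (n : ℕ) : ∀ x ∈ Icc 0 (piP p / 2), 0 ≤ F p n x := by
  intro x hx
  apply intervalIntegral.integral_nonneg hx.2
  intro s hs
  exact psi_nonneg hp (phi_nonneg hp n s ⟨le_trans hx.1 hs.1, hs.2⟩)

lemma F_pos (n : ℕ) : ∀ x ∈ Ico 0 (piP p / 2), 0 < F p n x := by
  intro x hx
  apply intervalIntegral.intervalIntegral_pos_of_pos_on
    (((continuous_psi hp).comp (continuous_phi hp n)).intervalIntegrable _ _) ?_ hx.2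
  intro s hs
  rcases n with _ | m
  · simpa [phi] using psi_pos hp (by norm_num : (0:ℝ) < 1)
  · exact psi_pos hp (phi_pos hp _ s ⟨lt_of_le_of_lt hx.1 hs.1, hs.2.le⟩)

lemma strictMonoOn_phi (n : ℕ) : StrictMonoOn (phi p (n + 1)) (Icc 0 (piP p / 2)) := by
  apply strictMonoOn_of_deriv_pos (convex_Icc 0 (piP p / 2))
    (continuous_phi hp (n + 1)).continuousOn
  intro x hx
  rw [interior_Icc] at hx
  rw [(hasDerivAt_phi hp n x).deriv]
  exact psi_pos (hq1 hp) (F_pos hp n x ⟨hx.1.le, hx.2⟩)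

omit hp in
lemma contOn {f f' : ℝ → ℝ} (hf : ∀ x, HasDerivAt f (f' x) x) (s : Set ℝ) :
    ContinuousOn f s := fun x _ => (hf x).continuousAt.continuousWithinAt

omit hp in
lemma ratio_antitone_left {f g f' g' : ℝ → ℝ} {a b : ℝ}
    (hf : ∀ x, HasDerivAt f (f' x) x) (hg : ∀ x, HasDerivAt g (g' x) x)
    (hfa : f a = 0) (hga : g a = 0)
    (hg' : ∀ x ∈ Ioo a b, 0 < g' x)
    (hr : AntitoneOn (fun x => f' x / g' x) (Ioo a b)) :
    AntitoneOn (fun x => f x / g x) (Ioc a b) := by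
  have gmono : ∀ u v, a ≤ u → u < v → v ≤ b → g u < g v := by
    intro u v hau huv hvb
    obtain ⟨c, hc, hceq⟩ := exists_hasDerivAt_eq_slope g g' huv (contOn hg _)
      (fun x _ => hg x)
    have hcab : c ∈ Ioo a b := ⟨lt_of_le_of_lt hau hc.1, lt_of_lt_of_le hc.2 hvb⟩
    have := hg' c hcab
    have hpos : 0 < (g v - g u) / (v - u) := hceq ▸ this
    have := mul_pos hpos (sub_pos.mpr huv)
    rw [div_mul_cancel₀] at this
    · linarith
    · exact ne_of_gt (sub_pos.mpr huv)
  intro x hx y hy hxy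
  rcases eq_or_lt_of_le hxy with rfl | hxy
  · exact le_refl _
  have hgx : 0 < g x := hga ▸ gmono a x (le_refl a) hx.1 hx.2
  have hgy : 0 < g y := hga ▸ gmono a y (le_refl a) hy.1 hy.2
  have hgxy : g x < g y := gmono x y hx.1.le hxy hy.2
  obtain ⟨d, hd, hdeq⟩ := exists_ratio_hasDerivAt_eq_ratio_slope f f' hx.1
    (contOn hf _) (fun z _ => hf z) g g' (contOn hg _) (fun z _ => hg z)
  obtain ⟨c, hc, hceq⟩ := exists_ratio_hasDerivAt_eq_ratio_slope f f' hxy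
    (contOn hf _) (fun z _ => hf z) g g' (contOn hg _) (fun z _ => hg z)
  rw [hfa, hga, sub_zero, sub_zero] at hdeq
  have hdab : d ∈ Ioo a b := ⟨hd.1, lt_of_lt_of_le (lt_of_lt_of_le hd.2 hxy.le) hy.2⟩
  have hcab : c ∈ Ioo a b := ⟨lt_trans hx.1 hc.1, lt_of_lt_of_le hc.2 hy.2⟩
  have hBc : 0 < g' c := hg' c hcab
  have hBd : 0 < g' d := hg' d hdab
  have hratio := hr hdab hcab (le_of_lt (lt_trans hd.2 hc.1))
  rw [div_le_div_iff₀ hBc hBd] at hratio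
  rw [div_le_div_iff₀ hgy hgx]
  have iden : (f x * g y - f y * g x) * (g' c * g' d)
      = (g y - g x) * g x * (f' d * g' c - f' c * g' d) := by
    linear_combination (g x * g' d) * hceq - (g y - g x) * g' c * hdeq
  have hrhs : 0 ≤ (g y - g x) * g x * (f' d * g' c - f' c * g' d) :=
    mul_nonneg (mul_nonneg (sub_pos.mpr hgxy).le hgx.le) (sub_nonneg.mpr hratio)
  nlinarith [mul_pos hBc hBd]

omit hp in
lemma ratio_antitone_right {f g f' g' : ℝ → ℝ} {a b : ℝ}
    (hf : ∀ x, HasDerivAt f (f' x) x) (hg : ∀ x, HasDerivAt g (g' x) x)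
    (hfb : f b = 0) (hgb : g b = 0)
    (hg' : ∀ x ∈ Ioo a b, g' x < 0)
    (hr : AntitoneOn (fun x => f' x / g' x) (Ioo a b)) :
    AntitoneOn (fun x => f x / g x) (Ico a b) := by
  have gmono : ∀ u v, a ≤ u → u < v → v ≤ b → g v < g u := by
    intro u v hau huv hvb
    obtain ⟨c, hc, hceq⟩ := exists_hasDerivAt_eq_slope g g' huv (contOn hg _)
      (fun x _ => hg x)
    have hcab : c ∈ Ioo a b := ⟨lt_of_le_of_lt hau hc.1, lt_of_lt_of_le hc.2 hvb⟩
    have := hg' c hcab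
    have hneg : (g v - g u) / (v - u) < 0 := hceq ▸ this
    have := mul_neg_of_neg_of_pos hneg (sub_pos.mpr huv)
    rw [div_mul_cancel₀] at this
    · linarith
    · exact ne_of_gt (sub_pos.mpr huv)
  intro x hx y hy hxy
  rcases eq_or_lt_of_le hxy with rfl | hxy
  · exact le_refl _
  have hgy : 0 < g y := hgb ▸ gmono y b hy.1 hy.2 (le_refl b)
  have hgx : 0 < g x := hgb ▸ gmono x b hx.1 (lt_of_lt_of_le hxy hy.2.le) (le_refl b)
  have hgxy : g y < g x := gmono x y hx.1 hxy hy.2.le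
  obtain ⟨d, hd, hdeq⟩ := exists_ratio_hasDerivAt_eq_ratio_slope f f' hy.2
    (contOn hf _) (fun z _ => hf z) g g' (contOn hg _) (fun z _ => hg z)
  obtain ⟨c, hc, hceq⟩ := exists_ratio_hasDerivAt_eq_ratio_slope f f' hxy
    (contOn hf _) (fun z _ => hf z) g g' (contOn hg _) (fun z _ => hg z)
  rw [hfb, hgb, zero_sub, zero_sub] at hdeq
  have hdab : d ∈ Ioo a b := ⟨lt_trans (lt_of_le_of_lt hx.1 hxy) hd.1, hd.2⟩
  have hcab : c ∈ Ioo a b := ⟨lt_of_le_of_lt hx.1 hc.1, lt_trans hc.2 hy.2⟩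
  have hBc : g' c < 0 := hg' c hcab
  have hBd : g' d < 0 := hg' d hdab
  have hratio := hr hcab hdab (le_of_lt (lt_trans hc.2 hd.1))
  -- hratio : f' d / g' d ≤ f' c / g' c
  have hratio' : f' d * g' c ≤ f' c * g' d := by
    have h1 : (-(f' d)) / (-(g' d)) ≤ (-(f' c)) / (-(g' c)) := by
      simpa [neg_div_neg_eq] using hratio
    rw [div_le_div_iff₀ (neg_pos.mpr hBd) (neg_pos.mpr hBc)] at h1
    nlinarith [h1]
  have hdeq2 : g y * f' d = f y * g' d := by linarith [hdeq]
  rw [div_le_div_iff₀ hgy hgx]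
  have iden : (f x * g y - f y * g x) * (g' c * g' d)
      = (g y - g x) * g y * (f' d * g' c - f' c * g' d) := by
    linear_combination (g y * g' d) * hceq - (g y - g x) * g' c * hdeq2
  have hrhs : 0 ≤ (g y - g x) * g y * (f' d * g' c - f' c * g' d) := by
    have h1 : (g y - g x) * g y ≤ 0 :=
      mul_nonpos_of_nonpos_of_nonneg (by linarith) hgy.le
    nlinarith [h1, sub_nonpos.mpr hratio']
  nlinarith [mul_pos_of_neg_of_neg hBc hBd]


omit hp in
lemma phi_zero_at_zero (n : ℕ) : phi p (n + 1) 0 = 0 := by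
  rw [phi_succ]; exact intervalIntegral.integral_same

omit hp in
lemma rpow_ratio_antitone {u v : ℝ → ℝ} {s : Set ℝ} {e : ℝ} (he : 0 < e)
    (hu : ∀ x ∈ s, 0 ≤ u x) (hv : ∀ x ∈ s, 0 < v x)
    (h : AntitoneOn (fun x => u x / v x) s) :
    AntitoneOn (fun x => u x ^ e / v x ^ e) s := by
  intro x hx y hy hxy
  have h1 : (u y / v y) ^ e ≤ (u x / v x) ^ e :=
    Real.rpow_le_rpow (div_nonneg (hu y hy) (hv y hy).le) (h hx hy hxy) he.le
  rwa [Real.div_rpow (hu y hy) (hv y hy).le, Real.div_rpow (hu x hx) (hv x hx).le] at h1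

lemma antitone_ratio : ∀ n, AntitoneOn
    (fun x => phi p n x / phi p (n + 1) x) (Ioc 0 (piP p / 2)) := by
  intro n
  induction n with
  | zero =>
      intro x hx y hy hxy
      have e0 : ∀ z : ℝ, phi p 0 z = 1 := fun z => rfl
      simp only [e0]
      apply one_div_le_one_div_of_le (phi_pos hp 1 x hx)
      exact (strictMonoOn_phi hp 0).monotoneOn ⟨hx.1.le, hx.2⟩ ⟨le_trans hx.1.le hxy, hy.2⟩ hxy
  | succ n ih =>
      have h1 : AntitoneOn (fun x => psi p (phi p n x) / psi p (phi p (n + 1) x))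
          (Ioo 0 (piP p / 2)) := by
        have := rpow_ratio_antitone (by linarith : (0:ℝ) < p - 1)
          (fun x hx => phi_nonneg hp n x ⟨hx.1.le, hx.2.le⟩)
          (fun x hx => phi_pos hp (n + 1) x ⟨hx.1, hx.2.le⟩)
          (ih.mono Ioo_subset_Ioc_self)
        intro x hx y hy hxy
        have e : ∀ z ∈ Ioo (0:ℝ) (piP p / 2),
            psi p (phi p n z) / psi p (phi p (n + 1) z)
              = phi p n z ^ (p - 1) / phi p (n + 1) z ^ (p - 1) := by
          intro z hz
          rw [psi_of_nonneg hp.ne' (phi_nonneg hp n z ⟨hz.1.le, hz.2.le⟩),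
            psi_of_nonneg hp.ne' (phi_nonneg hp (n + 1) z ⟨hz.1.le, hz.2.le⟩)]
        simp only []
        rw [e x hx, e y hy]
        exact this hx hy hxy
      have h2 : AntitoneOn (fun x => F p n x / F p (n + 1) x) (Ico 0 (piP p / 2)) := by
        apply ratio_antitone_right (f' := fun x => -psi p (phi p n x))
          (g' := fun x => -psi p (phi p (n + 1) x))
          (hasDerivAt_F hp n) (hasDerivAt_F hp (n + 1))
          (by unfold F; exact intervalIntegral.integral_same)
          (by unfold F; exact intervalIntegral.integral_same)
        · intro x hx
          exact neg_neg_iff_pos.mpr (psi_pos hp (phi_pos hp (n + 1) x ⟨hx.1, hx.2.le⟩))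
        · simpa only [neg_div_neg_eq] using h1
      have h3 : AntitoneOn (fun x => psi (p / (p - 1)) (F p n x) /
          psi (p / (p - 1)) (F p (n + 1) x)) (Ioo 0 (piP p / 2)) := by
        have hq := hq1 hp
        have := rpow_ratio_antitone (by linarith : (0:ℝ) < p / (p - 1) - 1)
          (fun x hx => F_nonneg hp n x ⟨hx.1.le, hx.2.le⟩)
          (fun x hx => F_pos hp (n + 1) x ⟨hx.1.le, hx.2⟩)
          (h2.mono Ioo_subset_Ico_self)
        intro x hx y hy hxy
        have e : ∀ z ∈ Ioo (0:ℝ) (piP p / 2),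
            psi (p / (p - 1)) (F p n z) / psi (p / (p - 1)) (F p (n + 1) z)
              = F p n z ^ (p / (p - 1) - 1) / F p (n + 1) z ^ (p / (p - 1) - 1) := by
          intro z hz
          rw [psi_of_nonneg hq.ne' (F_nonneg hp n z ⟨hz.1.le, hz.2.le⟩),
            psi_of_nonneg hq.ne' (F_nonneg hp (n + 1) z ⟨hz.1.le, hz.2.le⟩)]
        simp only []
        rw [e x hx, e y hy]
        exact this hx hy hxy
      apply ratio_antitone_left (f' := fun x => psi (p / (p - 1)) (F p n x))
        (g' := fun x => psi (p / (p - 1)) (F p (n + 1) x))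
        (hasDerivAt_phi hp n) (hasDerivAt_phi hp (n + 1))
        (phi_zero_at_zero n) (phi_zero_at_zero (n + 1))
      · intro x hx
        exact psi_pos (hq1 hp) (F_pos hp (n + 1) x ⟨hx.1.le, hx.2⟩)
      · exact h3


lemma tendsto_phi_div (n : ℕ) :
    Tendsto (fun x => phi p (n + 1) x / x) (nhdsWithin 0 (Ioi 0))
      (nhds (psi (p / (p - 1)) (F p n 0))) := by
  have h := hasDerivAt_iff_tendsto_slope.mp (hasDerivAt_phi hp n 0)
  have h2 : Tendsto (slope (phi p (n + 1)) 0) (nhdsWithin 0 (Ioi 0))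
      (nhds (psi (p / (p - 1)) (F p n 0))) :=
    h.mono_left (nhdsWithin_mono 0 (fun x hx => ne_of_gt hx))
  apply h2.congr
  intro x
  rw [slope_def_field, phi_zero_at_zero n, sub_zero, sub_zero]

lemma tendsto_ratio (n : ℕ) :
    Tendsto (fun x => phi p (n + 1) x / phi p (n + 2) x) (nhdsWithin 0 (Ioi 0))
      (nhds (psi (p / (p - 1)) (F p n 0) / psi (p / (p - 1)) (F p (n + 1) 0))) := by
  have hA : 0 < psi (p / (p - 1)) (F p (n + 1) 0) :=
    psi_pos (hq1 hp) (F_pos hp (n + 1) 0 ⟨le_refl 0, hT hp⟩)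
  have h := (tendsto_phi_div hp n).div (tendsto_phi_div hp (n + 1)) (ne_of_gt hA)
  apply h.congr'
  filter_upwards [self_mem_nhdsWithin] with x (hx : x ∈ Ioi (0:ℝ))
  show (phi p (n + 1) x / x) / (phi p (n + 1 + 1) x / x) = phi p (n + 1) x / phi p (n + 2) x
  rw [div_div_div_comm, div_self (ne_of_gt (show (0:ℝ) < x from hx)), div_one]


omit hp in
lemma ub_of_antitone_tendsto {r : ℝ → ℝ} {T L : ℝ}
    (ha : AntitoneOn r (Ioc 0 T)) (hl : Tendsto r (nhdsWithin 0 (Ioi 0)) (nhds L)) :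
    ∀ x ∈ Ioc (0:ℝ) T, r x ≤ L := by
  intro x hx
  refine ge_of_tendsto hl ?_
  filter_upwards [Ioc_mem_nhdsGT hx.1] with y hy
  exact ha ⟨hy.1, le_trans hy.2 hx.2⟩ hx hy.2

omit hp in
lemma sSup_eq_of_antitone_tendsto {r : ℝ → ℝ} {T L : ℝ} (hT0 : 0 < T)
    (ha : AntitoneOn r (Ioc 0 T)) (hl : Tendsto r (nhdsWithin 0 (Ioi 0)) (nhds L)) :
    sSup (r '' Ioc 0 T) = L := by
  have hub : ∀ z ∈ r '' Ioc 0 T, z ≤ L := by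
    rintro z ⟨x, hx, rfl⟩
    exact ub_of_antitone_tendsto ha hl x hx
  apply le_antisymm
  · exact csSup_le (Nonempty.image _ (nonempty_Ioc.mpr hT0)) hub
  · refine le_of_tendsto hl ?_
    filter_upwards [Ioc_mem_nhdsGT hT0] with y hy
    exact le_csSup ⟨L, hub⟩ (mem_image_of_mem _ hy)

omit hp in
lemma psi_div {q : ℝ} (hq : 1 < q) {a b : ℝ} (ha : 0 ≤ a) (hb : 0 < b) :
    psi q a / psi q b = psi q (a / b) := by
  rw [psi_of_nonneg hq.ne' ha, psi_of_nonneg hq.ne' hb.le,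
    psi_of_nonneg hq.ne' (div_nonneg ha hb.le), Real.div_rpow ha hb.le]

lemma main_eq (n : ℕ) :
    sSup ((fun x => phi p (n + 1) x / phi p (n + 2) x) '' Ioc 0 (piP p / 2))
      = psi (p / (p - 1)) (F p n 0 / F p (n + 1) 0) := by
  rw [← psi_div (hq1 hp) (F_nonneg hp n 0 ⟨le_refl 0, (hT hp).le⟩)
    (F_pos hp (n + 1) 0 ⟨le_refl 0, hT hp⟩)]
  exact sSup_eq_of_antitone_tendsto (hT hp) (antitone_ratio hp (n + 1)) (tendsto_ratio hp n)

lemma main_tendsto (n : ℕ) :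
    Tendsto (fun x => phi p (n + 1) x / phi p (n + 2) x) (nhdsWithin 0 (Ioi 0))
      (nhds (sSup ((fun x => phi p (n + 1) x / phi p (n + 2) x) '' Ioc 0 (piP p / 2)))) := by
  rw [main_eq hp n, ← psi_div (hq1 hp) (F_nonneg hp n 0 ⟨le_refl 0, (hT hp).le⟩)
    (F_pos hp (n + 1) 0 ⟨le_refl 0, hT hp⟩)]
  exact tendsto_ratio hp n

lemma A_ineq (n : ℕ) :
    F p (n + 1) 0 / F p (n + 2) 0 ≤ F p n 0 / F p (n + 1) 0 := by
  have hA0 : 0 < F p n 0 := F_pos hp n 0 ⟨le_refl 0, hT hp⟩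
  have hA1 : 0 < F p (n + 1) 0 := F_pos hp (n + 1) 0 ⟨le_refl 0, hT hp⟩
  have hA2 : 0 < F p (n + 2) 0 := F_pos hp (n + 2) 0 ⟨le_refl 0, hT hp⟩
  set c := F p n 0 / F p (n + 1) 0 with hc
  have hc0 : 0 < c := div_pos hA0 hA1
  have hd0 : 0 ≤ psi (p / (p - 1)) c := psi_nonneg (hq1 hp) hc0.le
  have hdc : psi (p / (p - 1)) c ^ (p - 1) = c := by
    rw [psi_of_nonneg (hq1 hp).ne' hc0.le, ← Real.rpow_mul hc0.le]
    have hp1 : p - 1 ≠ 0 := by linarith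
    have he : (p / (p - 1) - 1) * (p - 1) = 1 := by
      field_simp
      ring
    rw [he, Real.rpow_one]
  have hL : ∀ s ∈ Ioc (0:ℝ) (piP p / 2),
      phi p (n + 1) s ≤ psi (p / (p - 1)) c * phi p (n + 2) s := by
    intro s hs
    have h2 := phi_pos hp (n + 2) s hs
    have hub : phi p (n + 1) s / phi p (n + 2) s ≤ psi (p / (p - 1)) c := by
      have := ub_of_antitone_tendsto (antitone_ratio hp (n + 1)) (tendsto_ratio hp n) s hs
      rwa [psi_div (hq1 hp) (F_nonneg hp n 0 ⟨le_refl 0, (hT hp).le⟩) hA1] at this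
    calc phi p (n + 1) s = phi p (n + 1) s / phi p (n + 2) s * phi p (n + 2) s := by
          field_simp
      _ ≤ psi (p / (p - 1)) c * phi p (n + 2) s :=
          mul_le_mul_of_nonneg_right hub h2.le
  have hptw : ∀ s ∈ Icc (0:ℝ) (piP p / 2),
      psi p (phi p (n + 1) s) ≤ c * psi p (phi p (n + 2) s) := by
    intro s hs
    rcases eq_or_lt_of_le hs.1 with h0 | h0
    · rw [← h0, phi_zero_at_zero, phi_zero_at_zero]
      simp [psi]
    · have hs' : s ∈ Ioc (0:ℝ) (piP p / 2) := ⟨h0, hs.2⟩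
      have h1 := phi_nonneg hp (n + 1) s hs
      have h2 := phi_nonneg hp (n + 2) s hs
      rw [psi_of_nonneg hp.ne' h1, psi_of_nonneg hp.ne' h2]
      calc phi p (n + 1) s ^ (p - 1)
          ≤ (psi (p / (p - 1)) c * phi p (n + 2) s) ^ (p - 1) :=
            Real.rpow_le_rpow h1 (hL s hs') (by linarith)
        _ = psi (p / (p - 1)) c ^ (p - 1) * phi p (n + 2) s ^ (p - 1) :=
            Real.mul_rpow hd0 h2
        _ = c * phi p (n + 2) s ^ (p - 1) := by rw [hdc]
  have key : F p (n + 1) 0 ≤ c * F p (n + 2) 0 := by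
    have hint : (∫ s in (0:ℝ)..(piP p / 2), psi p (phi p (n + 1) s))
        ≤ ∫ s in (0:ℝ)..(piP p / 2), c * psi p (phi p (n + 2) s) := by
      apply intervalIntegral.integral_mono_on (hT hp).le
      · exact (((continuous_psi hp).comp (continuous_phi hp (n + 1)))).intervalIntegrable _ _
      · exact (continuous_const.mul
          ((continuous_psi hp).comp (continuous_phi hp (n + 2)))).intervalIntegrable _ _
      · exact hptw
    rw [intervalIntegral.integral_const_mul] at hint
    exact hint
  rw [div_le_iff₀ hA2]
  · exact key

lemma main_le (n : ℕ) :
    sSup ((fun x => phi p (n + 2) x / phi p (n + 3) x) '' Ioc 0 (piP p / 2)) ≤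
      sSup ((fun x => phi p (n + 1) x / phi p (n + 2) x) '' Ioc 0 (piP p / 2)) := by
  rw [main_eq hp (n + 1), main_eq hp n]
  have hA1 : 0 < F p (n + 1) 0 := F_pos hp (n + 1) 0 ⟨le_refl 0, hT hp⟩
  have hA2 : 0 < F p (n + 2) 0 := F_pos hp (n + 2) 0 ⟨le_refl 0, hT hp⟩
  rw [psi_of_nonneg (hq1 hp).ne' (div_nonneg (hA1.le) hA2.le),
    psi_of_nonneg (hq1 hp).ne' (div_nonneg (F_nonneg hp n 0 ⟨le_refl 0, (hT hp).le⟩) hA1.le)]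
  exact Real.rpow_le_rpow (div_nonneg hA1.le hA2.le) (A_ineq hp n) (by
    have := hq1 (p := p) hp
    linarith)

end P
end PhiAux
theorem phi_quotient_sup (p : ℝ) (hp : 1 < p) :
    (∀ n : ℕ, 1 ≤ n →
      sSup ((fun x => phi p n x / phi p (n + 1) x) '' Ioc 0 (piP p / 2)) =
        psi (p / (p - 1))
          ((∫ s in (0:ℝ)..(piP p / 2), psi p (phi p (n - 1) s)) /
            ∫ s in (0:ℝ)..(piP p / 2), psi p (phi p n s)) ∧
      Tendsto (fun x => phi p n x / phi p (n + 1) x) (nhdsWithin 0 (Ioi 0))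
        (nhds (sSup ((fun x => phi p n x / phi p (n + 1) x) '' Ioc 0 (piP p / 2))))) ∧
    (∀ n : ℕ, 2 ≤ n →
      sSup ((fun x => phi p n x / phi p (n + 1) x) '' Ioc 0 (piP p / 2)) ≤
        sSup ((fun x => phi p (n - 1) x / phi p n x) '' Ioc 0 (piP p / 2))) := by
  constructor
  · intro n hn
    obtain ⟨m, rfl⟩ : ∃ m, n = m + 1 := ⟨n - 1, (Nat.succ_pred_eq_of_pos hn).symm⟩
    refine ⟨PhiAux.main_eq hp m, PhiAux.main_tendsto hp m⟩
  · intro n hn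
    obtain ⟨m, rfl⟩ : ∃ m, n = m + 2 := ⟨n - 2, by omega⟩
    exact PhiAux.main_le hp m
end
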